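/- In the epidemic setting with severity and testing, let t ∈ ℝ with Ω_t nonempty, assume the suppression hypothesis holds at all times t' < t, and assume the notification hypothesis: the contact-tracing notification time τ^{A,c} : Ω → [0,∞] satisfies, for all ρ ∈ ℝ, P_t(τ^{A,c} ≤ ρ) = s^c_t · (P_t(τ̌^T_t ≤ ρ) − P_t(τ̌^T_t ≤ 0)) when ρ ≥ 0 and P_t(τ^{A,c} ≤ ρ) = 0 when ρ < 0, where s^c_t ∈ [0,1] and τ̌^T(ω) := τ^T(σ(ω)) − τ^σ(ω). Then for every ρ > 0, P_t(τ^{A,c} ≤ ρ) = s^c_t · Σ_g Σ_{τ > 0} ((F^T_{t−τ,g}(ρ + τ) − F^T_{t−τ,g}(τ))/(1 − ξ_{t−τ}·F^T_{t−τ,g}(τ))) · P_t(τ^σ_t = τ, Ĝ_t = g), where g ranges over the range of G and the sum over τ runs over the finitely many positive generation times with Ω_{t−τ,g} nonempty. -/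

import Mathlib

open Finset
open scoped Classical ENNReal NNReal

noncomputable section

variable {Ω : Type*} [Fintype Ω]

/-- Number of elements of `Ω` satisfying `E`, as a real number. -/
def cnt (E : Ω → Prop) : ℝ := ((Finset.univ.filter E).card : ℝ)

/-- The uniform (counting) probability of the event `E`. -/
def pr (E : Ω → Prop) : ℝ := cnt E / (Fintype.card Ω : ℝ)

/-- The conditional probability of the event `E` given the event `C`
(junk value `0` if `C` is empty). -/
def prC (C E : Ω → Prop) : ℝ := cnt (fun ω => C ω ∧ E ω) / cnt C

/-- The expectation of `X` under the uniform probability measure. -/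
def expec (X : Ω → ℝ) : ℝ := (∑ ω, X ω) / (Fintype.card Ω : ℝ)

/-- The conditional expectation of `X` given the event `C`, i.e. the average of `X`
over `C` (junk value `0` if `C` is empty). -/
def expecC (C : Ω → Prop) (X : Ω → ℝ) : ℝ :=
  (∑ ω ∈ Finset.univ.filter C, X ω) / cnt C

end

noncomputable section

variable {Ω : Type*} [Fintype Ω]

/-- `ninf tI σ τ ω` is the number of people infected by `ω` exactly at `ω`'s infectious
age `τ`: the number of `ω' ∈ Ω_{>0}` with `σ ω' = ω` and generation time `τ^σ ω' = τ`. -/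
def ninf (tI : Ω → ℝ) (σ : Ω → Ω) (τ : ℝ) (ω : Ω) : ℝ :=
  cnt (fun ω' => 0 < tI ω' ∧ σ ω' = ω ∧ tI ω' - tI (σ ω') = τ)

/-- The (finitely many) positive times `τ` such that `Ω_{t-τ}` is nonempty. -/
def genTimes (tI : Ω → ℝ) (t : ℝ) : Finset ℝ :=
  (Finset.univ.image (fun ω' => t - tI ω')).filter (fun τ => 0 < τ)

end

noncomputable section

variable {Ω : Type*} [Fintype Ω]

/-- The (finitely many) positive times `τ` such that `Ω_{t-τ,g}` is nonempty. -/
def genTimesG (tI G : Ω → ℝ) (t g : ℝ) : Finset ℝ :=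
  ((Finset.univ.filter (fun ω' => G ω' = g)).image (fun ω' => t - tI ω')).filter
    (fun τ => 0 < τ)

/-- `FT tI G τT t' g τ` is the improper CDF `F^T_{t',g}(τ) = P_{t',g}(τ^T ≤ τ)` of the
testing time of individuals infected at `t'` with severity `g`. -/
def FT (tI G : Ω → ℝ) (τT : Ω → ℝ≥0∞) (t' g τ : ℝ) : ℝ :=
  prC (fun ω => tI ω = t' ∧ G ω = g) (fun ω => (τT ω : EReal) ≤ (τ : ℝ))

end


noncomputable section
variable {Ω : Type*} [Fintype Ω]

lemma cnt_congr {P Q : Ω → Prop} (h : ∀ ω, P ω ↔ Q ω) : cnt P = cnt Q := by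
  unfold cnt; rw [Finset.filter_congr (fun ω _ => h ω)]

lemma cnt_pos_iff {P : Ω → Prop} : 0 < cnt P ↔ ∃ ω, P ω := by
  unfold cnt
  rw [Nat.cast_pos, Finset.card_pos]
  constructor
  · rintro ⟨ω, hω⟩; exact ⟨ω, (Finset.mem_filter.1 hω).2⟩
  · rintro ⟨ω, hω⟩; exact ⟨ω, Finset.mem_filter.2 ⟨Finset.mem_univ _, hω⟩⟩

lemma cnt_split (P Q : Ω → Prop) (h : ∀ ω, Q ω → P ω) :
    cnt P = cnt Q + cnt (fun ω => P ω ∧ ¬ Q ω) := by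
  unfold cnt
  rw [← Nat.cast_add]
  congr 1
  rw [← Finset.card_union_of_disjoint]
  · congr 1
    ext ω
    simp only [Finset.mem_union, Finset.mem_filter, Finset.mem_univ, true_and]
    by_cases hq : Q ω <;> simp [hq, h ω]
  · rw [Finset.disjoint_left]
    intro ω h1 h2
    simp only [Finset.mem_filter] at h1 h2
    exact h2.2.2 h1.2

lemma cnt_fiberwise {α : Type*} (P : Ω → Prop) (f : Ω → α) (s : Finset α)
    (h : ∀ ω, P ω → f ω ∈ s) :
    cnt P = ∑ a ∈ s, cnt (fun ω => P ω ∧ f ω = a) := by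
  unfold cnt
  rw [← Nat.cast_sum]
  congr 1
  rw [Finset.card_eq_sum_card_fiberwise (t := s) (f := f)
    (fun ω hω => h ω (Finset.mem_filter.1 hω).2)]
  refine Finset.sum_congr rfl fun a _ => ?_
  congr 1
  rw [Finset.filter_filter]
  ext ω
  simp [Finset.mem_filter]

lemma cnt_eq_zero {C : Ω → Prop} (h : ∀ ω, ¬ C ω) : cnt C = 0 := by
  unfold cnt
  rw [Finset.filter_false_of_mem (fun ω _ => h ω)]
  simp

def csum (C : Ω → Prop) (X : Ω → ℝ) : ℝ := ∑ ω ∈ Finset.univ.filter C, X ω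

lemma csum_congr {C D : Ω → Prop} (h : ∀ ω, C ω ↔ D ω) (X : Ω → ℝ) :
    csum C X = csum D X := by
  unfold csum; rw [Finset.filter_congr (fun ω _ => h ω)]

lemma csum_eq_zero {C : Ω → Prop} (h : ∀ ω, ¬ C ω) (X : Ω → ℝ) : csum C X = 0 := by
  unfold csum
  rw [Finset.filter_false_of_mem (fun ω _ => h ω)]
  simp

lemma csum_fiberwise {α : Type*} (C : Ω → Prop) (X : Ω → ℝ) (f : Ω → α) (s : Finset α)
    (h : ∀ ω, C ω → f ω ∈ s) :
    csum C X = ∑ a ∈ s, csum (fun ω => C ω ∧ f ω = a) X := by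
  unfold csum
  rw [← Finset.sum_fiberwise_of_maps_to (g := f) (t := s)
    (fun ω hω => h ω (Finset.mem_filter.1 hω).2) X]
  refine Finset.sum_congr rfl fun a _ => ?_
  apply Finset.sum_congr _ (fun _ _ => rfl)
  rw [Finset.filter_filter]
  ext ω
  simp [Finset.mem_filter]

lemma expecC_congr {C D : Ω → Prop} (h : ∀ ω, C ω ↔ D ω) (X : Ω → ℝ) :
    expecC C X = expecC D X := by
  unfold expecC
  rw [Finset.filter_congr (fun ω _ => h ω), cnt_congr h]

lemma csum_eq_expecC_mul (C : Ω → Prop) (X : Ω → ℝ) (hC : cnt C ≠ 0) :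
    csum C X = expecC C X * cnt C := by
  unfold csum expecC; field_simp

lemma fiber_sum (tI : Ω → ℝ) (σ : Ω → Ω) (G : Ω → ℝ) (t τ g : ℝ) (Q : Ω → Prop) :
    cnt (fun ω => tI ω = t ∧ 0 < tI ω ∧ tI ω - tI (σ ω) = τ ∧ G (σ ω) = g ∧ Q (σ ω)) =
      csum (fun ω' => (tI ω' = t - τ ∧ G ω' = g) ∧ Q ω') (ninf tI σ τ) := by
  unfold csum
  rw [cnt_fiberwise _ σ (Finset.univ.filter (fun ω' => (tI ω' = t - τ ∧ G ω' = g) ∧ Q ω'))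
    (fun ω hω => by
      simp only [Finset.mem_filter, Finset.mem_univ, true_and]
      obtain ⟨ht, h0, hτ, hg, hq⟩ := hω
      exact ⟨⟨by linarith, hg⟩, hq⟩)]
  refine Finset.sum_congr (by ext ω'; simp) fun ω' hω' => ?_
  simp only [Finset.mem_filter, Finset.mem_univ, true_and] at hω'
  obtain ⟨⟨ht', hg'⟩, hq'⟩ := hω'
  unfold ninf
  apply cnt_congr
  intro ω
  constructor
  · rintro ⟨⟨ht, h0, hτ, hg, hq⟩, hσe⟩
    exact ⟨h0, hσe, hτ⟩
  · rintro ⟨h0, hσe, hτ⟩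
    have htω : tI ω = t := by rw [hσe] at hτ; linarith
    refine ⟨⟨htω, h0, hτ, ?_, ?_⟩, hσe⟩ <;> rw [hσe] <;> assumption

lemma fiber_sum' (tI : Ω → ℝ) (σ : Ω → Ω) (G : Ω → ℝ) (t τ g : ℝ) :
    cnt (fun ω => tI ω = t ∧ 0 < tI ω ∧ tI ω - tI (σ ω) = τ ∧ G (σ ω) = g) =
      csum (fun ω' => tI ω' = t - τ ∧ G ω' = g) (ninf tI σ τ) := by
  have := fiber_sum tI σ G t τ g (fun _ => True)
  rw [cnt_congr (Q := fun ω => tI ω = t ∧ 0 < tI ω ∧ tI ω - tI (σ ω) = τ ∧ G (σ ω) = g ∧ True)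
    (by intro ω; tauto), this]
  exact csum_congr (by intro ω'; tauto) _

lemma ereal_shift (x : ℝ≥0∞) (τ ρ : ℝ) :
    ((x : EReal) - ((τ : ℝ) : EReal) ≤ ((ρ : ℝ) : EReal)) ↔
      (x : EReal) ≤ (((ρ + τ : ℝ)) : EReal) := by
  rw [EReal.sub_le_iff_le_add (Or.inl (EReal.coe_ne_bot τ)) (Or.inl (EReal.coe_ne_top τ)),
    ← EReal.coe_add]

lemma ereal_shift0 (x : ℝ≥0∞) (τ : ℝ) :
    ((x : EReal) - ((τ : ℝ) : EReal) ≤ ((0 : ℝ) : EReal)) ↔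
      (x : EReal) ≤ ((τ : ℝ) : EReal) := by
  have := ereal_shift x τ 0
  rwa [zero_add] at this

lemma key (tI : Ω → ℝ) (σ : Ω → Ω) (G : Ω → ℝ) (τT : Ω → ℝ≥0∞) (ξ : ℝ → ℝ)
    (t τ g ρ : ℝ) (hτ : 0 < τ) (hρ : 0 < ρ)
    (hne' : (Finset.univ.filter (fun ω' => tI ω' = t - τ ∧ G ω' = g)).Nonempty)
    (hsup' : ∀ ρ' : ℝ≥0∞,
      0 < prC (fun ω => tI ω = t - τ ∧ G ω = g) (fun ω => τT ω = ρ') →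
        0 < 1 - ξ (t - τ) * FT tI G τT (t - τ) g τ ∧
        expecC (fun ω => tI ω = t - τ ∧ G ω = g ∧ τT ω = ρ') (ninf tI σ τ) =
          ((1 - ξ (t - τ) * (if (ρ' : EReal) ≤ (τ : ℝ) then (1 : ℝ) else 0)) /
              (1 - ξ (t - τ) * FT tI G τT (t - τ) g τ)) *
            expecC (fun ω => tI ω = t - τ ∧ G ω = g) (ninf tI σ τ)) :
    cnt (fun ω => tI ω = t ∧ 0 < tI ω ∧ tI ω - tI (σ ω) = τ ∧ G (σ ω) = g ∧
        ((τT (σ ω) : EReal) ≤ ((ρ + τ : ℝ) : EReal) ∧ ¬ (τT (σ ω) : EReal) ≤ ((τ : ℝ) : EReal))) =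
      ((FT tI G τT (t - τ) g (ρ + τ) - FT tI G τT (t - τ) g τ) /
          (1 - ξ (t - τ) * FT tI G τT (t - τ) g τ)) *
        cnt (fun ω => tI ω = t ∧ 0 < tI ω ∧ tI ω - tI (σ ω) = τ ∧ G (σ ω) = g) := by
  classical
  have hM : 0 < cnt (fun ω' : Ω => tI ω' = t - τ ∧ G ω' = g) := by
    rw [cnt_pos_iff]
    obtain ⟨ω0, hω0⟩ := hne'
    exact ⟨ω0, (Finset.mem_filter.1 hω0).2⟩
  have hMne : cnt (fun ω' : Ω => tI ω' = t - τ ∧ G ω' = g) ≠ 0 := ne_of_gt hM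
  have hden : 0 < 1 - ξ (t - τ) * FT tI G τT (t - τ) g τ := by
    obtain ⟨ω0, hω0⟩ := hne'
    have hb0 : tI ω0 = t - τ ∧ G ω0 = g := (Finset.mem_filter.1 hω0).2
    have hpos : 0 < prC (fun ω => tI ω = t - τ ∧ G ω = g) (fun ω => τT ω = τT ω0) := by
      apply div_pos _ hM
      rw [cnt_pos_iff]; exact ⟨ω0, hb0, rfl⟩
    exact (hsup' (τT ω0) hpos).1
  have hdenne : (1 - ξ (t - τ) * FT tI G τT (t - τ) g τ) ≠ 0 := ne_of_gt hden
  -- abbreviations (as plain terms)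
  have e1 : cnt (fun ω => tI ω = t ∧ 0 < tI ω ∧ tI ω - tI (σ ω) = τ ∧ G (σ ω) = g ∧
      ((τT (σ ω) : EReal) ≤ ((ρ + τ : ℝ) : EReal) ∧ ¬ (τT (σ ω) : EReal) ≤ ((τ : ℝ) : EReal))) =
      csum (fun ω' => (tI ω' = t - τ ∧ G ω' = g) ∧
        ((τT ω' : EReal) ≤ ((ρ + τ : ℝ) : EReal) ∧ ¬ (τT ω' : EReal) ≤ ((τ : ℝ) : EReal)))
        (ninf tI σ τ) :=
    fiber_sum tI σ G t τ g
      (fun ω' => (τT ω' : EReal) ≤ ((ρ + τ : ℝ) : EReal) ∧ ¬ (τT ω' : EReal) ≤ ((τ : ℝ) : EReal))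
  have e6 : cnt (fun ω => tI ω = t ∧ 0 < tI ω ∧ tI ω - tI (σ ω) = τ ∧ G (σ ω) = g) =
      csum (fun ω' => tI ω' = t - τ ∧ G ω' = g) (ninf tI σ τ) :=
    fiber_sum' tI σ G t τ g
  have e2 : csum (fun ω' => (tI ω' = t - τ ∧ G ω' = g) ∧
      ((τT ω' : EReal) ≤ ((ρ + τ : ℝ) : EReal) ∧ ¬ (τT ω' : EReal) ≤ ((τ : ℝ) : EReal)))
      (ninf tI σ τ) =
      ∑ ρ' ∈ Finset.univ.image τT,
        csum (fun ω' => ((tI ω' = t - τ ∧ G ω' = g) ∧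
          ((τT ω' : EReal) ≤ ((ρ + τ : ℝ) : EReal) ∧ ¬ (τT ω' : EReal) ≤ ((τ : ℝ) : EReal))) ∧
          τT ω' = ρ') (ninf tI σ τ) :=
    csum_fiberwise _ _ τT _ (fun ω _ => Finset.mem_image_of_mem _ (Finset.mem_univ ω))
  have e3 : ∀ ρ' ∈ Finset.univ.image τT,
      csum (fun ω' => ((tI ω' = t - τ ∧ G ω' = g) ∧
          ((τT ω' : EReal) ≤ ((ρ + τ : ℝ) : EReal) ∧ ¬ (τT ω' : EReal) ≤ ((τ : ℝ) : EReal))) ∧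
          τT ω' = ρ') (ninf tI σ τ) =
        (1 / (1 - ξ (t - τ) * FT tI G τT (t - τ) g τ)) *
          expecC (fun ω' => tI ω' = t - τ ∧ G ω' = g) (ninf tI σ τ) *
          cnt (fun ω' => ((tI ω' = t - τ ∧ G ω' = g) ∧
            ((τT ω' : EReal) ≤ ((ρ + τ : ℝ) : EReal) ∧ ¬ (τT ω' : EReal) ≤ ((τ : ℝ) : EReal))) ∧
            τT ω' = ρ') := by
    intro ρ' _
    by_cases hex : ∃ ω0, ((tI ω0 = t - τ ∧ G ω0 = g) ∧
        ((τT ω0 : EReal) ≤ ((ρ + τ : ℝ) : EReal) ∧ ¬ (τT ω0 : EReal) ≤ ((τ : ℝ) : EReal))) ∧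
        τT ω0 = ρ'
    · obtain ⟨ω0, ⟨hb0, hq0⟩, hτ0⟩ := hex
      have hQρ' : (ρ' : EReal) ≤ ((ρ + τ : ℝ) : EReal) ∧ ¬ (ρ' : EReal) ≤ ((τ : ℝ) : EReal) :=
        hτ0 ▸ hq0
      have hiff : ∀ ω', (((tI ω' = t - τ ∧ G ω' = g) ∧
          ((τT ω' : EReal) ≤ ((ρ + τ : ℝ) : EReal) ∧ ¬ (τT ω' : EReal) ≤ ((τ : ℝ) : EReal))) ∧
          τT ω' = ρ') ↔ ((tI ω' = t - τ ∧ G ω' = g) ∧ τT ω' = ρ') := by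
        intro ω'
        constructor
        · rintro ⟨⟨hb, -⟩, he⟩; exact ⟨hb, he⟩
        · rintro ⟨hb, he⟩; exact ⟨⟨hb, he ▸ hQρ'⟩, he⟩
      have hcpos : 0 < cnt (fun ω' => (tI ω' = t - τ ∧ G ω' = g) ∧ τT ω' = ρ') := by
        rw [cnt_pos_iff]; exact ⟨ω0, hb0, hτ0⟩
      have hpos : 0 < prC (fun ω => tI ω = t - τ ∧ G ω = g) (fun ω => τT ω = ρ') :=
        div_pos hcpos hM
      obtain ⟨-, hexp⟩ := hsup' ρ' hpos
      rw [csum_congr hiff, cnt_congr hiff,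
        csum_eq_expecC_mul _ _ (ne_of_gt hcpos),
        expecC_congr (C := fun ω' => (tI ω' = t - τ ∧ G ω' = g) ∧ τT ω' = ρ')
          (D := fun ω => tI ω = t - τ ∧ G ω = g ∧ τT ω = ρ')
          (fun ω => by tauto), hexp, if_neg hQρ'.2]
      ring
    · have hnone : ∀ ω', ¬ (((tI ω' = t - τ ∧ G ω' = g) ∧
          ((τT ω' : EReal) ≤ ((ρ + τ : ℝ) : EReal) ∧ ¬ (τT ω' : EReal) ≤ ((τ : ℝ) : EReal))) ∧
          τT ω' = ρ') := fun ω' h => hex ⟨ω', h⟩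
      rw [csum_eq_zero hnone, cnt_eq_zero hnone]
      ring
  have e4 : ∑ ρ' ∈ Finset.univ.image τT,
      cnt (fun ω' => ((tI ω' = t - τ ∧ G ω' = g) ∧
        ((τT ω' : EReal) ≤ ((ρ + τ : ℝ) : EReal) ∧ ¬ (τT ω' : EReal) ≤ ((τ : ℝ) : EReal))) ∧
        τT ω' = ρ') =
      cnt (fun ω' => (tI ω' = t - τ ∧ G ω' = g) ∧
        ((τT ω' : EReal) ≤ ((ρ + τ : ℝ) : EReal) ∧ ¬ (τT ω' : EReal) ≤ ((τ : ℝ) : EReal))) :=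
    (cnt_fiberwise _ τT _ (fun ω _ => Finset.mem_image_of_mem _ (Finset.mem_univ ω))).symm
  have hFT : ∀ τ' : ℝ,
      cnt (fun ω' => (tI ω' = t - τ ∧ G ω' = g) ∧ (τT ω' : EReal) ≤ ((τ' : ℝ) : EReal)) =
        FT tI G τT (t - τ) g τ' * cnt (fun ω' : Ω => tI ω' = t - τ ∧ G ω' = g) := by
    intro τ'
    rw [FT, prC]
    field_simp
  have hQcnt : cnt (fun ω' => (tI ω' = t - τ ∧ G ω' = g) ∧
      ((τT ω' : EReal) ≤ ((ρ + τ : ℝ) : EReal) ∧ ¬ (τT ω' : EReal) ≤ ((τ : ℝ) : EReal))) =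
      FT tI G τT (t - τ) g (ρ + τ) * cnt (fun ω' : Ω => tI ω' = t - τ ∧ G ω' = g) -
        FT tI G τT (t - τ) g τ * cnt (fun ω' : Ω => tI ω' = t - τ ∧ G ω' = g) := by
    have hsplit := cnt_split
      (fun ω' : Ω => (tI ω' = t - τ ∧ G ω' = g) ∧ (τT ω' : EReal) ≤ ((ρ + τ : ℝ) : EReal))
      (fun ω' : Ω => (tI ω' = t - τ ∧ G ω' = g) ∧ (τT ω' : EReal) ≤ ((τ : ℝ) : EReal))
      (fun ω' h => ⟨h.1, h.2.trans (EReal.coe_le_coe_iff.2 (by linarith))⟩)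
    have hcg : cnt (fun ω' : Ω =>
        ((tI ω' = t - τ ∧ G ω' = g) ∧ (τT ω' : EReal) ≤ ((ρ + τ : ℝ) : EReal)) ∧
          ¬ ((tI ω' = t - τ ∧ G ω' = g) ∧ (τT ω' : EReal) ≤ ((τ : ℝ) : EReal))) =
        cnt (fun ω' => (tI ω' = t - τ ∧ G ω' = g) ∧
          ((τT ω' : EReal) ≤ ((ρ + τ : ℝ) : EReal) ∧ ¬ (τT ω' : EReal) ≤ ((τ : ℝ) : EReal))) :=
      cnt_congr (fun ω' => by tauto)
    rw [← hFT, ← hFT, ← hcg]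
    linarith
  have e5 : csum (fun ω' : Ω => tI ω' = t - τ ∧ G ω' = g) (ninf tI σ τ) =
      expecC (fun ω' : Ω => tI ω' = t - τ ∧ G ω' = g) (ninf tI σ τ) *
        cnt (fun ω' : Ω => tI ω' = t - τ ∧ G ω' = g) :=
    csum_eq_expecC_mul _ _ hMne
  rw [e1, e6, e2, Finset.sum_congr rfl e3, ← Finset.mul_sum, e4, hQcnt, e5]
  field_simp
end

/-- time evolution equation for the contact-tracing notification
time.  Epidemic setting with severity `G`, testing time `τ^T : Ω → [0,∞]`,
notification time `τ^{A,c} : Ω → [0,∞]`, isolation probabilities `ξ : ℝ → [0,1]`, and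
contact-tracing efficiency `s^c_t ∈ [0,1]`.  Assume the suppression hypothesis at all
`t' < t` and the notification hypothesis relating `τ^{A,c}` to
`τ̌^T(ω) := τ^T(σ ω) − τ^σ(ω)`.  Then for every `ρ > 0`:
`P_t(τ^{A,c} ≤ ρ) = s^c_t · Σ_g Σ_{τ>0} ((F^T_{t−τ,g}(ρ+τ) − F^T_{t−τ,g}(τ))/(1 − ξ_{t−τ}·F^T_{t−τ,g}(τ))) · P_t(τ^σ_t = τ, Ĝ_t = g)`. -/
theorem statement_12 {Ω : Type*} [Fintype Ω] (tI : Ω → ℝ) (σ : Ω → Ω)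
    (hσ : ∀ ω, 0 < tI ω → tI (σ ω) < tI ω)
    (G : Ω → ℝ) (τT : Ω → ℝ≥0∞) (τAc : Ω → ℝ≥0∞) (ξ : ℝ → ℝ)
    (hξ : ∀ s : ℝ, 0 ≤ ξ s ∧ ξ s ≤ 1) (t : ℝ)
    (sc : ℝ) (hsc0 : 0 ≤ sc) (hsc1 : sc ≤ 1)
    (hne : (Finset.univ.filter (fun ω => tI ω = t)).Nonempty)
    (hsup : ∀ t' : ℝ, t' < t → ∀ g : ℝ,
      (Finset.univ.filter (fun ω => tI ω = t' ∧ G ω = g)).Nonempty →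
      ∀ τ : ℝ, 0 < τ → ∀ ρ' : ℝ≥0∞,
        0 < prC (fun ω => tI ω = t' ∧ G ω = g) (fun ω => τT ω = ρ') →
          0 < 1 - ξ t' * FT tI G τT t' g τ ∧
          expecC (fun ω => tI ω = t' ∧ G ω = g ∧ τT ω = ρ') (ninf tI σ τ) =
            ((1 - ξ t' * (if (ρ' : EReal) ≤ (τ : ℝ) then (1 : ℝ) else 0)) /
                (1 - ξ t' * FT tI G τT t' g τ)) *
              expecC (fun ω => tI ω = t' ∧ G ω = g) (ninf tI σ τ))
    (hnotif : ∀ ρ : ℝ,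
      (0 ≤ ρ →
        prC (fun ω => tI ω = t) (fun ω => (τAc ω : EReal) ≤ (ρ : ℝ)) =
          sc * (prC (fun ω => tI ω = t)
              (fun ω => 0 < tI ω ∧
                (τT (σ ω) : EReal) - ((tI ω - tI (σ ω) : ℝ) : EReal) ≤ (ρ : ℝ)) -
            prC (fun ω => tI ω = t)
              (fun ω => 0 < tI ω ∧
                (τT (σ ω) : EReal) - ((tI ω - tI (σ ω) : ℝ) : EReal) ≤ ((0 : ℝ) : EReal)))) ∧
      (ρ < 0 →
        prC (fun ω => tI ω = t) (fun ω => (τAc ω : EReal) ≤ (ρ : ℝ)) = 0)) :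
    ∀ ρ : ℝ, 0 < ρ →
      prC (fun ω => tI ω = t) (fun ω => (τAc ω : EReal) ≤ (ρ : ℝ)) =
        sc * ∑ g ∈ Finset.univ.image G, ∑ τ ∈ genTimesG tI G t g,
          ((FT tI G τT (t - τ) g (ρ + τ) - FT tI G τT (t - τ) g τ) /
              (1 - ξ (t - τ) * FT tI G τT (t - τ) g τ)) *
            prC (fun ω => tI ω = t)
              (fun ω => 0 < tI ω ∧ tI ω - tI (σ ω) = τ ∧ G (σ ω) = g) := by
  intro ρ hρ
  obtain ⟨h1, -⟩ := hnotif ρ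
  rw [h1 hρ.le]
  congr 1
  simp only [prC]
  rw [div_sub_div_same]
  -- notation for the coefficient
  have hsub := cnt_split
    (fun ω => tI ω = t ∧ 0 < tI ω ∧
      (τT (σ ω) : EReal) - ((tI ω - tI (σ ω) : ℝ) : EReal) ≤ ((ρ : ℝ) : EReal))
    (fun ω => tI ω = t ∧ 0 < tI ω ∧
      (τT (σ ω) : EReal) - ((tI ω - tI (σ ω) : ℝ) : EReal) ≤ ((0 : ℝ) : EReal))
    (fun ω h => ⟨h.1, h.2.1, h.2.2.trans (EReal.coe_le_coe_iff.2 hρ.le)⟩)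
  have hD : cnt (fun ω => (tI ω = t ∧ 0 < tI ω ∧
        (τT (σ ω) : EReal) - ((tI ω - tI (σ ω) : ℝ) : EReal) ≤ ((ρ : ℝ) : EReal)) ∧
      ¬ (tI ω = t ∧ 0 < tI ω ∧
        (τT (σ ω) : EReal) - ((tI ω - tI (σ ω) : ℝ) : EReal) ≤ ((0 : ℝ) : EReal))) =
      cnt (fun ω => tI ω = t ∧ 0 < tI ω ∧
        ((τT (σ ω) : EReal) ≤ ((ρ + (tI ω - tI (σ ω)) : ℝ) : EReal) ∧
          ¬ (τT (σ ω) : EReal) ≤ (((tI ω - tI (σ ω)) : ℝ) : EReal))) := by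
    apply cnt_congr
    intro ω
    rw [ereal_shift (τT (σ ω)) (tI ω - tI (σ ω)) ρ, ereal_shift0 (τT (σ ω)) (tI ω - tI (σ ω))]
    tauto
  have hnum : cnt (fun ω => tI ω = t ∧ 0 < tI ω ∧
        (τT (σ ω) : EReal) - ((tI ω - tI (σ ω) : ℝ) : EReal) ≤ ((ρ : ℝ) : EReal)) -
      cnt (fun ω => tI ω = t ∧ 0 < tI ω ∧
        (τT (σ ω) : EReal) - ((tI ω - tI (σ ω) : ℝ) : EReal) ≤ ((0 : ℝ) : EReal)) =
      cnt (fun ω => tI ω = t ∧ 0 < tI ω ∧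
        ((τT (σ ω) : EReal) ≤ ((ρ + (tI ω - tI (σ ω)) : ℝ) : EReal) ∧
          ¬ (τT (σ ω) : EReal) ≤ (((tI ω - tI (σ ω)) : ℝ) : EReal))) := by
    rw [← hD]; linarith
  -- decompose the difference count over severities and generation times
  have h2 : cnt (fun ω => tI ω = t ∧ 0 < tI ω ∧
        ((τT (σ ω) : EReal) ≤ ((ρ + (tI ω - tI (σ ω)) : ℝ) : EReal) ∧
          ¬ (τT (σ ω) : EReal) ≤ (((tI ω - tI (σ ω)) : ℝ) : EReal))) =
      ∑ g ∈ Finset.univ.image G, ∑ τ ∈ genTimesG tI G t g,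
        ((FT tI G τT (t - τ) g (ρ + τ) - FT tI G τT (t - τ) g τ) /
            (1 - ξ (t - τ) * FT tI G τT (t - τ) g τ)) *
          cnt (fun ω => tI ω = t ∧ 0 < tI ω ∧ tI ω - tI (σ ω) = τ ∧ G (σ ω) = g) := by
    rw [cnt_fiberwise _ (fun ω => G (σ ω)) (Finset.univ.image G)
      (fun ω _ => Finset.mem_image_of_mem _ (Finset.mem_univ _))]
    refine Finset.sum_congr rfl fun g _ => ?_
    rw [cnt_fiberwise _ (fun ω => tI ω - tI (σ ω)) (genTimesG tI G t g)
      (fun ω hω => by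
        obtain ⟨⟨ht, h0, -⟩, hg⟩ := hω
        simp only [genTimesG, Finset.mem_filter, Finset.mem_image, Finset.mem_univ, true_and]
        exact ⟨⟨σ ω, hg, by linarith⟩, by have := hσ ω h0; linarith⟩)]
    refine Finset.sum_congr rfl fun τ hτmem => ?_
    simp only [genTimesG, Finset.mem_filter, Finset.mem_image, Finset.mem_univ, true_and] at hτmem
    obtain ⟨⟨ω1, hg1, ht1⟩, hτpos⟩ := hτmem
    have hne' : (Finset.univ.filter (fun ω' => tI ω' = t - τ ∧ G ω' = g)).Nonempty := by
      refine ⟨ω1, Finset.mem_filter.2 ⟨Finset.mem_univ _, by linarith, ?_⟩⟩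
      simpa using hg1
    have hsup' := hsup (t - τ) (by linarith) g hne' τ hτpos
    have hkey := key tI σ G τT ξ t τ g ρ hτpos hρ hne' hsup'
    rw [← hkey]
    apply cnt_congr
    intro ω
    constructor
    · rintro ⟨⟨⟨ht, h0, hle, hnle⟩, hg⟩, hτe⟩
      rw [hτe] at hle hnle
      exact ⟨ht, h0, hτe, hg, hle, hnle⟩
    · rintro ⟨ht, h0, hτe, hg, hle, hnle⟩
      rw [← hτe] at hle hnle
      exact ⟨⟨⟨ht, h0, hle, hnle⟩, hg⟩, hτe⟩
  rw [hnum, h2, Finset.sum_div]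
  refine Finset.sum_congr rfl fun g _ => ?_
  rw [Finset.sum_div]
  refine Finset.sum_congr rfl fun τ _ => ?_
  rw [mul_div_assoc]
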